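/- If a chain of domino tiles is blocked, then its two ends coincide, i.e., a₁ = bₙ. -/

import Mathlib

/-- A domino tile is an unordered pair of values in `{0,…,6}`. -/
abbrev Tile := Sym2 (Fin 7)

/-- The pip sum of the tile `[a,b]` is `a + b`. -/
def pips (t : Tile) : ℕ :=
  Sym2.lift ⟨fun (a b : Fin 7) => (a : ℕ) + (b : ℕ), fun a b => Nat.add_comm a b⟩ t

/-- A chain of domino tiles: a nonempty finite sequence of oriented tiles
`(a₁,b₁),…,(aₙ,bₙ)` whose underlying unordered tiles are pairwise distinct and
which satisfies `bᵢ = aᵢ₊₁` for all `1 ≤ i < n`. -/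
structure DChain where
  tiles : List (Fin 7 × Fin 7)
  ne : tiles ≠ []
  nodup : (tiles.map fun p => Sym2.mk p.1 p.2).Nodup
  linked : tiles.Chain' fun p q => p.2 = q.1

/-- The left end `a₁` of a chain. -/
def DChain.left (C : DChain) : Fin 7 := (C.tiles.head C.ne).1

/-- The right end `bₙ` of a chain. -/
def DChain.right (C : DChain) : Fin 7 := (C.tiles.getLast C.ne).2

/-- The `2n` entries `a₁,b₁,a₂,b₂,…,aₙ,bₙ` of a chain. -/
def DChain.entries (C : DChain) : List (Fin 7) := C.tiles.flatMap fun p => [p.1, p.2]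

/-- The underlying (unordered) tiles of a chain. -/
def DChain.tileList (C : DChain) : List Tile := C.tiles.map fun p => Sym2.mk p.1 p.2

/-- The total pip sum of a chain. -/
def DChain.pipsSum (C : DChain) : ℕ := (C.tiles.map fun p => (p.1 : ℕ) + (p.2 : ℕ)).sum

/-- A chain is blocked if no domino tile outside the chain contains its left end,
and no domino tile outside the chain contains its right end. -/
def DChain.Blocked (C : DChain) : Prop :=
  ∀ t : Tile, t ∉ C.tileList → C.left ∉ t ∧ C.right ∉ t

/-- The multiplicity of the value `v` in a tile. -/
def cnt (v : Fin 7) : Sym2 (Fin 7) → ℕ :=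
  Sym2.lift ⟨fun a b => (if a = v then 1 else 0) + (if b = v then 1 else 0),
    fun a b => by ring⟩

lemma cnt_mk (v a b : Fin 7) :
    cnt v (Sym2.mk a b) = (if a = v then 1 else 0) + (if b = v then 1 else 0) := rfl

lemma cnt_eq_zero {v : Fin 7} {t : Sym2 (Fin 7)} (h : v ∉ t) : cnt v t = 0 := by
  induction t using Sym2.ind with
  | _ a b =>
    rw [Sym2.mem_iff] at h
    push_neg at h
    simp [cnt_mk, Ne.symm h.1, Ne.symm h.2]

lemma sum_cnt (v : Fin 7) : (∑ t : Sym2 (Fin 7), cnt v t) = 8 := by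
  revert v; decide

lemma parity (v : Fin 7) : ∀ (l : List (Fin 7 × Fin 7)) (h : l ≠ [])
    (_ : l.Chain' fun p q => p.2 = q.1),
    ((l.flatMap fun p => [p.1, p.2]).count v) % 2 =
      ((if (l.head h).1 = v then 1 else 0) +
        (if (l.getLast h).2 = v then 1 else 0)) % 2
  | [], h, _ => absurd rfl h
  | [p], _, _ => by simp [List.count_cons]; split_ifs <;> simp_all
  | p :: q :: rest, _, hc => by
    replace hc := List.isChain_cons_cons.mp hc
    have ih := parity v (q :: rest) (by simp) hc.2
    rw [List.flatMap_cons, List.count_append]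
    rw [List.getLast_cons (by simp : q :: rest ≠ [])]
    have h1 : (List.count v [p.1, p.2]) =
        (if p.1 = v then 1 else 0) + (if q.1 = v then 1 else 0) := by
      simp [List.count_cons, hc.1]; omega
    rw [h1]
    simp only [List.head_cons] at ih ⊢
    grind

/-- If a chain of domino tiles is blocked, then its two ends coincide. -/
theorem blocked_ends_eq (C : DChain) (h : C.Blocked) : C.left = C.right := by
  set v := C.left with hv
  have hcount : (C.entries.count v) = ((C.tiles.map fun p => cnt v (Sym2.mk p.1 p.2)).sum) := by
    unfold DChain.entries
    induction C.tiles with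
    | nil => simp
    | cons p l ih =>
      obtain ⟨a, b⟩ := p
      rw [List.flatMap_cons, List.count_append, List.map_cons, List.sum_cons, ih]
      simp [cnt_mk, List.count_cons]
      omega
  have hmap : (C.tiles.map fun p => cnt v (Sym2.mk p.1 p.2)) = C.tileList.map (cnt v) := by
    simp [DChain.tileList]
  have hnodup : C.tileList.Nodup := C.nodup
  have hsum : (C.tileList.map (cnt v)).sum = ∑ t ∈ C.tileList.toFinset, cnt v t := by
    rw [List.sum_toFinset _ hnodup]
  have hfull : ∑ t ∈ C.tileList.toFinset, cnt v t = ∑ t : Sym2 (Fin 7), cnt v t := by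
    apply Finset.sum_subset (Finset.subset_univ _)
    intro t _ ht
    rw [List.mem_toFinset] at ht
    exact cnt_eq_zero ((h t ht).1)
  have heven : C.entries.count v % 2 = 0 := by
    rw [hcount, hmap, hsum, hfull, sum_cnt]
  have hp := parity v C.tiles C.ne C.linked
  have hl : (C.tiles.head C.ne).1 = v := rfl
  unfold DChain.entries at heven
  rw [heven] at hp
  by_contra hne
  have h2 : (C.tiles.getLast C.ne).2 ≠ v := fun e => hne e.symm
  rw [if_pos hl, if_neg h2] at hp
  simp at hp
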